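/- Delayed branching preserves functional control flow: for a straight-line block of n instructions in which exactly one instruction computes a branch target t, the final PC after executing the block under BasicBlocker delayed-branch semantics (write target to T, apply PC ← T after the n-th instruction) equals the PC that would result from placing the branch as the last instruction of the block under immediate-branch semantics, provided the other n−1 instructions do not write PC or T and their effects commute with the position of the branch computation. -/

import Mathlib

/-- Machine state: registers, memory, the program counter `pc` and the
BasicBlocker target register `t`. -/
structure MState where
  regs : ℕ → ℕ
  mem : ℕ → ℕ
  pc : ℕ
  t : ℕ

/-- A non-branch instruction neither reads nor writes `PC` or `T`: it
preserves `pc` and `t`, and its effect on registers and memory depends only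
on registers and memory. -/
def NonBranch (f : MState → MState) : Prop :=
  (∀ s, (f s).pc = s.pc ∧ (f s).t = s.t) ∧
  (∀ s s', s.regs = s'.regs → s.mem = s'.mem →
    (f s).regs = (f s').regs ∧ (f s).mem = (f s').mem)

/-- The delayed-branch semantics of the branch: write the target to `T`. -/
def branchDelayed (tgt : ℕ) (s : MState) : MState := { s with t := tgt }

/-- The immediate-branch semantics of the branch: write the target to `PC`. -/
def branchImmediate (tgt : ℕ) (s : MState) : MState := { s with pc := tgt }

/-- Apply `PC ← T` (performed at the end of a BasicBlocker block). -/
def applyPCfromT (s : MState) : MState := { s with pc := s.t }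

def runList (l : List (MState → MState)) (s : MState) : MState :=
  l.foldl (fun s f => f s) s

/-- Delayed branching preserves functional control flow: for a straight-line
block of `n` instructions in which exactly one instruction computes a branch
target `tgt` (the same value regardless of its position in the block), the
final `PC` after executing the block under BasicBlocker delayed-branch
semantics — with the branch scheduled at any position `k`, writing `tgt` to
`T`, and `PC ← T` applied after the `n`-th instruction — equals the `PC`
resulting from placing the branch as the last instruction of the block under
immediate-branch semantics, provided the other `n − 1` instructions do not
read or write `PC` or `T`. -/

lemma runList_t_preserved (fs : List (MState → MState))
    (hnb : ∀ f ∈ fs, NonBranch f) (s : MState) :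
    (runList fs s).t = s.t := by
  induction fs generalizing s with
  | nil => rfl
  | cons f fs ih =>
    have h := (hnb f List.mem_cons_self).1 s
    show (runList fs (f s)).t = s.t
    rw [ih (fun g hg => hnb g (List.mem_cons_of_mem _ hg)), h.2]

theorem delayed_branch_preserves_control_flow
    (n : ℕ) (tgt : ℕ)
    (fs : List (MState → MState))       -- the n − 1 non-branch instructions
    (hlen : fs.length = n - 1) (hn : 0 < n)
    (hnb : ∀ f ∈ fs, NonBranch f)
    (k : ℕ) (hk : k ≤ fs.length)        -- position of the branch (delayed)
    (s0 : MState) :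
    (applyPCfromT
        (runList (fs.take k ++ [branchDelayed tgt] ++ fs.drop k) s0)).pc =
      (branchImmediate tgt (runList fs s0)).pc := by
  have hd : ∀ g ∈ fs.drop k, NonBranch g := fun g hg => hnb g (List.mem_of_mem_drop hg)
  have : runList (fs.take k ++ [branchDelayed tgt] ++ fs.drop k) s0 =
      runList (fs.drop k) (branchDelayed tgt (runList (fs.take k) s0)) := by
    simp [runList, List.foldl_append]
  rw [applyPCfromT, this, runList_t_preserved _ hd, branchDelayed, branchImmediate]
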